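/- Every countable group G embeds into a group generated by two elements: there exist a group T, elements t₁, t₂ of T with Subgroup.closure {t₁, t₂} = ⊤, and an injective group homomorphism from G into T. -/

import Mathlib

open Equiv

namespace HNNAux

variable {G : Type} [Group G]

/-- "Dial": multiply the `G`-coordinate by `c m k` at cell `(m, k)`. -/
def dial (c : ℤ → ℤ → G) : Equiv.Perm (G × ℤ × ℤ) where
  toFun p := (c p.2.1 p.2.2 * p.1, p.2.1, p.2.2)
  invFun p := ((c p.2.1 p.2.2)⁻¹ * p.1, p.2.1, p.2.2)
  left_inv p := by simp
  right_inv p := by simp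

@[simp] lemma dial_apply (c : ℤ → ℤ → G) (x : G) (m k : ℤ) :
    dial c (x, m, k) = (c m k * x, m, k) := rfl

lemma dial_mul (c c' : ℤ → ℤ → G) :
    dial c * dial c' = dial (fun m k => c m k * c' m k) := by
  ext ⟨x, m, k⟩ <;> simp [dial, mul_assoc]

@[simp] lemma dial_inv (c : ℤ → ℤ → G) :
    (dial c)⁻¹ = dial (fun m k => (c m k)⁻¹) := by
  ext ⟨x, m, k⟩ <;> simp [dial, Equiv.Perm.inv_def]

/-- Shift the `k` coordinate by one at level `m = j`. -/
def shiftK (j : ℤ) : Equiv.Perm (G × ℤ × ℤ) where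
  toFun p := (p.1, p.2.1, if p.2.1 = j then p.2.2 + 1 else p.2.2)
  invFun p := (p.1, p.2.1, if p.2.1 = j then p.2.2 - 1 else p.2.2)
  left_inv p := by dsimp only; split_ifs <;> simp
  right_inv p := by dsimp only; split_ifs <;> simp

omit [Group G] in
@[simp] lemma shiftK_apply (j : ℤ) (x : G) (m k : ℤ) :
    shiftK j (x, m, k) = (x, m, if m = j then k + 1 else k) := rfl

omit [Group G] in
@[simp] lemma shiftK_inv_apply (j : ℤ) (x : G) (m k : ℤ) :
    (shiftK j)⁻¹ (x, m, k) = (x, m, if m = j then k - 1 else k) := rfl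

/-- Shift the `m` coordinate by `a`. -/
def shiftM (a : ℤ) : Equiv.Perm (G × ℤ × ℤ) where
  toFun p := (p.1, p.2.1 + a, p.2.2)
  invFun p := (p.1, p.2.1 - a, p.2.2)
  left_inv p := by simp
  right_inv p := by simp

omit [Group G] in
@[simp] lemma shiftM_apply (a : ℤ) (x : G) (m k : ℤ) :
    shiftM a (x, m, k) = (x, m + a, k) := rfl

omit [Group G] in
@[simp] lemma shiftM_inv_apply (a : ℤ) (x : G) (m k : ℤ) :
    (shiftM a)⁻¹ (x, m, k) = (x, m - a, k) := rfl

omit [Group G] in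
lemma shiftM_zero : (shiftM 0 : Equiv.Perm (G × ℤ × ℤ)) = 1 := by
  apply Equiv.ext; rintro ⟨x, m, k⟩; simp

omit [Group G] in
lemma shiftM_mul (a b : ℤ) :
    (shiftM a * shiftM b : Equiv.Perm (G × ℤ × ℤ)) = shiftM (a + b) := by
  apply Equiv.ext; rintro ⟨x, m, k⟩
  simp [Equiv.Perm.mul_apply]; ring

omit [Group G] in
lemma shiftM_inv (a : ℤ) :
    ((shiftM a)⁻¹ : Equiv.Perm (G × ℤ × ℤ)) = shiftM (-a) := by
  apply Equiv.ext; rintro ⟨x, m, k⟩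
  simp [sub_eq_add_neg]

/-- The dial data: at level `m = 2n ≥ 0`, multiply by `e n` on lamps `k ≤ 0`. -/
def c0 (e : ℕ → G) : ℤ → ℤ → G := fun m k =>
  if 0 ≤ m ∧ m % 2 = 0 ∧ k ≤ 0 then e (m / 2).toNat else 1

lemma c0_two_mul (e : ℕ → G) (n : ℕ) (k : ℤ) :
    c0 e (2 * n) k = if k ≤ 0 then e n else 1 := by
  unfold c0
  have h : ((2 * (n : ℤ)) / 2).toNat = n := by omega
  by_cases hk : k ≤ 0
  · rw [if_pos ⟨by omega, by omega, hk⟩, if_pos hk, h]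
  · rw [if_neg (by tauto), if_neg hk]

lemma c0_eq_one (e : ℕ → G) {m : ℤ} (h : ¬(0 ≤ m ∧ m % 2 = 0)) (k : ℤ) :
    c0 e m k = 1 := by
  unfold c0
  rw [if_neg (by tauto)]

/-- First generator. -/
def sigma (e : ℕ → G) : Equiv.Perm (G × ℤ × ℤ) := dial (c0 e) * shiftK (-1)

/-- Second generator. -/
def tau : Equiv.Perm (G × ℤ × ℤ) := shiftM 1

def U (e : ℕ → G) (n : ℕ) : Equiv.Perm (G × ℤ × ℤ) :=
  shiftM (-(2 * n)) * sigma e * shiftM (2 * n)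

def V (e : ℕ → G) : Equiv.Perm (G × ℤ × ℤ) := shiftM 1 * sigma e * shiftM (-1)

lemma U_eq (e : ℕ → G) (n : ℕ) :
    U e n = dial (fun m k => c0 e (m + 2 * n) k) * shiftK (-1 - 2 * n) := by
  apply Equiv.ext; rintro ⟨x, m, k⟩
  simp only [U, sigma, Equiv.Perm.mul_apply, dial_apply, shiftK_apply, shiftM_apply]
  rw [show m + 2 * (n:ℤ) + -(2 * (n:ℤ)) = m by ring]
  by_cases h : m + 2 * (n : ℤ) = -1
  · rw [if_pos h, if_pos (by omega : m = -1 - 2 * (n : ℤ))]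
  · rw [if_neg h, if_neg (by omega : ¬ m = -1 - 2 * (n : ℤ))]

lemma V_eq (e : ℕ → G) :
    V e = dial (fun m k => c0 e (m - 1) k) * shiftK 0 := by
  apply Equiv.ext; rintro ⟨x, m, k⟩
  simp only [V, sigma, Equiv.Perm.mul_apply, dial_apply, shiftK_apply, shiftM_apply,
    shiftM_inv_apply]
  rw [show m + (-1:ℤ) = m - 1 by ring, show m - 1 + 1 = m by ring]
  by_cases h : m - 1 = -1
  · rw [if_pos h, if_pos (by omega : m = 0)]
  · rw [if_neg h, if_neg (by omega : ¬ m = 0)]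

/-- The embedding candidate. -/
def phi : G →* Equiv.Perm (G × ℤ × ℤ) where
  toFun g := dial (fun m k => if m = 0 ∧ k = 1 then g else 1)
  map_one' := by
    apply Equiv.ext; rintro ⟨x, m, k⟩
    simp [dial]
  map_mul' g h := by
    rw [dial_mul]
    congr 1
    funext m k
    split_ifs <;> simp

lemma phi_apply (g : G) :
    phi g = dial (fun m k => if m = 0 ∧ k = 1 then g else 1) := rfl

lemma phi_injective : Function.Injective (phi (G := G)) := by
  intro g h hgh
  have := congrArg (fun f : Equiv.Perm (G × ℤ × ℤ) => (f (1, 0, 1)).1) hgh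
  simpa [phi] using this

/-- The key commutator computation. -/
lemma key (e : ℕ → G) (n : ℕ) :
    U e n * V e * (U e n)⁻¹ * (V e)⁻¹ = phi ((e n)⁻¹) := by
  rw [U_eq, V_eq, phi_apply]
  apply Equiv.ext; rintro ⟨x, m, k⟩
  simp only [mul_inv_rev, dial_inv, Equiv.Perm.mul_apply, dial_apply, shiftK_apply,
    shiftK_inv_apply]
  by_cases h0 : m = 0
  · subst h0
    have hA : ¬ ((0:ℤ) = -1 - 2 * (n:ℤ)) := by omega
    have hcv : ∀ k' : ℤ, c0 e ((0:ℤ) - 1) k' = 1 :=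
      fun k' => c0_eq_one e (by omega) k'
    simp only [if_neg hA, if_pos (rfl : (0:ℤ) = 0), hcv, one_mul, inv_one, sub_add_cancel,
      zero_add, c0_two_mul, Prod.mk.injEq, eq_self_iff_true, and_true, true_and]
    split_ifs <;> first | (exfalso; omega) | (group; done) | (simp; done)
  · by_cases h1 : m = -1 - 2 * (n : ℤ)
    · subst h1
      have hcu : ∀ k' : ℤ, c0 e ((-1 - 2 * (n:ℤ)) + 2 * n) k' = 1 :=
        fun k' => c0_eq_one e (by omega) k'
      have hcv : ∀ k' : ℤ, c0 e ((-1 - 2 * (n:ℤ)) - 1) k' = 1 :=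
        fun k' => c0_eq_one e (by omega) k'
      have hB : ¬ ((-1 - 2 * (n:ℤ)) = 0) := by omega
      simp only [eq_self_iff_true, if_true, hB, hcu, hcv, one_mul, inv_one,
        sub_add_cancel, Prod.mk.injEq, and_true, true_and, false_and, and_false, if_false,
        ite_false, ite_true]
      first | trivial | group
    · have hC : ¬ (m = 0 ∧ k = 1) := by tauto
      simp only [if_neg h1, if_neg h0, hC, Prod.mk.injEq, eq_self_iff_true, and_true,
        true_and, if_false, ite_false]
      by_cases hev : 0 ≤ m - 1 ∧ (m - 1) % 2 = 0
      · have hcu : ∀ k', c0 e (m + 2 * n) k' = 1 :=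
          fun k' => c0_eq_one e (by omega) k'
        simp only [hcu, one_mul, inv_one]
        group
      · have hcv : ∀ k', c0 e (m - 1) k' = 1 :=
          fun k' => c0_eq_one e (by tauto) k'
        simp only [hcv, one_mul, inv_one]
        group

lemma shiftM_mem (e : ℕ → G) (a : ℤ) :
    shiftM a ∈ Subgroup.closure {sigma e, tau} := by
  have htau : (tau : Equiv.Perm (G × ℤ × ℤ)) ∈ Subgroup.closure {sigma e, tau} :=
    Subgroup.subset_closure (by simp)
  induction a using Int.induction_on with
  | zero => rw [shiftM_zero]; exact one_mem _
  | succ i ih =>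
    rw [show ((i : ℤ) + 1) = (i : ℤ) + 1 from rfl, ← shiftM_mul]
    exact mul_mem ih htau
  | pred i ih =>
    rw [show (-(i : ℤ) - 1) = (-(i:ℤ)) + (-1) by ring, ← shiftM_mul]
    refine mul_mem ih ?_
    rw [← shiftM_inv]
    exact inv_mem htau

lemma phi_mem (e : ℕ → G) (he : Function.Surjective e) (g : G) :
    phi g ∈ Subgroup.closure {sigma e, tau} := by
  obtain ⟨n, rfl⟩ := he g
  have hσ : sigma e ∈ Subgroup.closure {sigma e, tau} :=
    Subgroup.subset_closure (by simp)
  have hU : U e n ∈ Subgroup.closure {sigma e, tau} :=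
    mul_mem (mul_mem (shiftM_mem e _) hσ) (shiftM_mem e _)
  have hV : V e ∈ Subgroup.closure {sigma e, tau} :=
    mul_mem (mul_mem (shiftM_mem e _) hσ) (shiftM_mem e _)
  have : phi (e n) = (U e n * V e * (U e n)⁻¹ * (V e)⁻¹)⁻¹ := by
    rw [key, map_inv, inv_inv]
  rw [this]
  exact inv_mem (mul_mem (mul_mem (mul_mem hU hV) (inv_mem hU)) (inv_mem hV))

/-- The countable-to-2-generator embedding theorem for `Type 0` groups. -/
theorem aux (G : Type) [Group G] [Countable G] :
    ∃ (T : Type) (_ : Group T) (t₁ t₂ : T),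
      Subgroup.closure {t₁, t₂} = ⊤ ∧
      ∃ f : G →* T, Function.Injective f := by
  classical
  obtain ⟨fi, hfi⟩ := Countable.exists_injective_nat G
  set e : ℕ → G := fun n => if h : ∃ g : G, fi g = n then h.choose else 1 with he_def
  have he : Function.Surjective e := by
    intro g
    refine ⟨fi g, ?_⟩
    have hex : ∃ g' : G, fi g' = fi g := ⟨g, rfl⟩
    simp only [he_def, dif_pos hex]
    exact hfi hex.choose_spec
  set H : Subgroup (Equiv.Perm (G × ℤ × ℤ)) := Subgroup.closure {sigma e, tau} with hH
  have hσ : sigma e ∈ H := Subgroup.subset_closure (by simp)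
  have hτ : (tau : Equiv.Perm (G × ℤ × ℤ)) ∈ H := Subgroup.subset_closure (by simp)
  refine ⟨H, inferInstance, ⟨sigma e, hσ⟩, ⟨tau, hτ⟩, ?_, ?_⟩
  · apply Subgroup.map_injective (Subgroup.subtype_injective H)
    rw [MonoidHom.map_closure]
    rw [Set.image_insert_eq, Set.image_singleton]
    rw [← MonoidHom.range_eq_map, Subgroup.range_subtype]
    simp only [Subgroup.coe_subtype]
    exact hH.symm
  · refine ⟨(phi (G := G)).codRestrict H (phi_mem e he), ?_⟩
    intro a b hab
    exact phi_injective (congrArg Subtype.val hab)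

end HNNAux

/-- Higman–Neumann–Neumann: every countable group embeds into a group
generated by two elements. -/
theorem countable_group_embeds_in_two_generator_group
    (G : Type*) [Group G] [Countable G] :
    ∃ (T : Type) (_ : Group T) (t₁ t₂ : T),
      Subgroup.closure {t₁, t₂} = ⊤ ∧
      ∃ f : G →* T, Function.Injective f := by
  haveI : Countable (Shrink.{0} G) := Countable.of_equiv G (equivShrink.{0} G)
  obtain ⟨T, instT, t₁, t₂, hgen, F, hF⟩ := HNNAux.aux (Shrink.{0} G)
  refine ⟨T, instT, t₁, t₂, hgen,
    F.comp (Shrink.mulEquiv : Shrink.{0} G ≃* G).symm.toMonoidHom, ?_⟩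
  exact hF.comp (Shrink.mulEquiv : Shrink.{0} G ≃* G).symm.injective
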